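/- There exists a constant C > 0 such that for all x, y in the closed half-plane H̄ = {x ∈ ℝ² : x₁ ≤ 0} with x ≠ y, Boggio's biharmonic Green function of the half-plane satisfies the growth bound |G_H(x,y)| ≤ C (1 + |x|² + |y|²)(1 + (log|x|)₊ + (log|y|)₊), where (log s)₊ = max(log s, 0). -/

import Mathlib

open MeasureTheory Real Filter

noncomputable section

/-- ℝ² with the Euclidean norm. -/
abbrev E2 : Type := EuclideanSpace ℝ (Fin 2)

/-- The open half-plane `H = {x ∈ ℝ² : x₁ < 0}`. -/
def Hset : Set E2 := {x : E2 | x 0 < 0}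

/-- Reflection `x* = (−x₁, x₂)` across `∂H`. -/
def refl2 (x : E2) : E2 := WithLp.toLp 2 (fun i => if i = 0 then -(x 0) else x i)

/-- The boundary point `(0, t) ∈ ∂H`. -/
def bd (t : ℝ) : E2 := WithLp.toLp 2 (fun i => if i = 0 then 0 else t)

/-- The Laplace operator `Δf = ∑ᵢ ∂²f/∂xᵢ²`. -/
def lap (f : E2 → ℝ) (x : E2) : ℝ :=
  ∑ i, iteratedFDeriv ℝ 2 f x ![EuclideanSpace.single i 1, EuclideanSpace.single i 1]

/-- The partial derivative `∂₁ f` with respect to the first coordinate. -/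
def pd1 (f : E2 → ℝ) (x : E2) : ℝ := fderiv ℝ f x (EuclideanSpace.single 0 1)

/-- Boggio's biharmonic Green function of the half-plane `H ⊆ ℝ²`. -/
def boggio2 (x y : E2) : ℝ :=
  (1 / (8 * π)) * dist x y ^ 2 *
    ∫ v in (1:ℝ)..(dist (refl2 x) y / dist x y), (v ^ 2 - 1) / v

/-- Reflection across the boundary increases distance for points of the closed half-plane. -/
lemma dist_le_dist_refl2 (x y : E2) (hx : x 0 ≤ 0) (hy : y 0 ≤ 0) :
    dist x y ≤ dist (refl2 x) y := by
  rw [EuclideanSpace.dist_eq, EuclideanSpace.dist_eq]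
  apply Real.sqrt_le_sqrt
  rw [Fin.sum_univ_two, Fin.sum_univ_two]
  simp only [refl2, Real.dist_eq, sq_abs]
  norm_num
  nlinarith [sq_nonneg (x 0 - y 0), mul_nonneg (neg_nonneg.2 hx) (neg_nonneg.2 hy)]

/-- Reflection is an isometry of norms. -/
lemma norm_refl2 (x : E2) : ‖refl2 x‖ = ‖x‖ := by
  rw [EuclideanSpace.norm_eq, EuclideanSpace.norm_eq]
  rw [Fin.sum_univ_two, Fin.sum_univ_two]
  simp [refl2, Real.norm_eq_abs, abs_neg]

/-- Elementary bounds for the Boggio integral. -/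
lemma boggio_integral_bound (A : ℝ) (hA : 1 ≤ A) :
    (∫ v in (1:ℝ)..A, (v ^ 2 - 1) / v) ∈ Set.Icc (0:ℝ) ((A^2 - 1)/2) := by
  have hInt : IntervalIntegrable (fun v => (v ^ 2 - 1) / v) volume 1 A := by
    apply ContinuousOn.intervalIntegrable
    apply ContinuousOn.div (by fun_prop) (by fun_prop)
    intro v hv
    rw [Set.uIcc_of_le hA] at hv
    linarith [hv.1]
  constructor
  · apply intervalIntegral.integral_nonneg hA
    intro v hv
    have h0 : (0:ℝ) < v := by linarith [hv.1]
    have : (0:ℝ) ≤ v^2 - 1 := by nlinarith [hv.1]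
    exact div_nonneg this h0.le
  · have h2 : (∫ v in (1:ℝ)..A, (v ^ 2 - 1) / v) ≤ ∫ v in (1:ℝ)..A, v := by
      apply intervalIntegral.integral_mono_on hA hInt
        (by apply ContinuousOn.intervalIntegrable; fun_prop)
      intro v hv
      have h1 : (1:ℝ) ≤ v := hv.1
      rw [div_le_iff₀ (by linarith)]
      nlinarith
    rw [integral_id] at h2
    linarith

/-- growth bound for Boggio's Green function of the half-plane on
`H̄ = {x₁ ≤ 0}`. -/
theorem boggio2_growth_bound :
    ∃ C > (0:ℝ), ∀ x y : E2, x 0 ≤ 0 → y 0 ≤ 0 → x ≠ y →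
      |boggio2 x y| ≤ C * (1 + ‖x‖ ^ 2 + ‖y‖ ^ 2)
        * (1 + max (Real.log ‖x‖) 0 + max (Real.log ‖y‖) 0) := by
  refine ⟨1, one_pos, fun x y hx hy hxy => ?_⟩
  set d := dist x y with hd
  set ds := dist (refl2 x) y with hds
  have hd0 : 0 < d := dist_pos.2 hxy
  have hdds : d ≤ ds := dist_le_dist_refl2 x y hx hy
  have hA : 1 ≤ ds / d := (one_le_div hd0).2 hdds
  obtain ⟨hI0, hI1⟩ := boggio_integral_bound (ds / d) hA
  have hds_le : ds ≤ ‖x‖ + ‖y‖ := by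
    calc ds ≤ ‖refl2 x‖ + ‖y‖ := dist_le_norm_add_norm _ _
    _ = ‖x‖ + ‖y‖ := by rw [norm_refl2]
  -- the middle expression
  have hpi : (0:ℝ) < π := Real.pi_pos
  have hG : |boggio2 x y| ≤ ds ^ 2 / (16 * π) := by
    rw [boggio2, abs_mul, abs_mul]
    have h1 : |1 / (8 * π)| = 1 / (8 * π) := abs_of_pos (by positivity)
    have h2 : |d ^ 2| = d ^ 2 := abs_of_pos (by positivity)
    rw [← hd, ← hds, h1, h2, abs_of_nonneg hI0]
    have key : d ^ 2 * (∫ v in (1:ℝ)..(ds / d), (v ^ 2 - 1) / v) ≤ ds ^ 2 / 2 := by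
      have : d ^ 2 * (∫ v in (1:ℝ)..(ds / d), (v ^ 2 - 1) / v)
          ≤ d ^ 2 * (((ds / d) ^ 2 - 1) / 2) :=
        mul_le_mul_of_nonneg_left hI1 (by positivity)
      have heq : d ^ 2 * (((ds / d) ^ 2 - 1) / 2) = (ds ^ 2 - d ^ 2) / 2 := by
        field_simp
      nlinarith [sq_nonneg d]
    calc 1 / (8 * π) * d ^ 2 * (∫ v in (1:ℝ)..(ds / d), (v ^ 2 - 1) / v)
        = 1 / (8 * π) * (d ^ 2 * (∫ v in (1:ℝ)..(ds / d), (v ^ 2 - 1) / v)) := by ring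
      _ ≤ 1 / (8 * π) * (ds ^ 2 / 2) := by
          apply mul_le_mul_of_nonneg_left key (by positivity)
      _ = ds ^ 2 / (16 * π) := by ring
  have hds2 : ds ^ 2 ≤ 2 * ‖x‖ ^ 2 + 2 * ‖y‖ ^ 2 := by
    nlinarith [dist_nonneg.trans hds_le, norm_nonneg x, norm_nonneg y,
      sq_nonneg (‖x‖ - ‖y‖)]
  have hpi3 : (3:ℝ) ≤ π := by linarith [Real.pi_gt_three]
  have hm1 : (0:ℝ) ≤ max (Real.log ‖x‖) 0 := le_max_right _ _
  have hm2 : (0:ℝ) ≤ max (Real.log ‖y‖) 0 := le_max_right _ _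
  have hmid : |boggio2 x y| ≤ 1 + ‖x‖ ^ 2 + ‖y‖ ^ 2 := by
    have : ds ^ 2 / (16 * π) ≤ ds ^ 2 / 16 := by
      apply div_le_div_of_nonneg_left (by positivity) (by norm_num) (by nlinarith)
    nlinarith [norm_nonneg x, norm_nonneg y]
  calc |boggio2 x y| ≤ 1 + ‖x‖ ^ 2 + ‖y‖ ^ 2 := hmid
    _ = 1 * (1 + ‖x‖ ^ 2 + ‖y‖ ^ 2) * 1 := by ring
    _ ≤ 1 * (1 + ‖x‖ ^ 2 + ‖y‖ ^ 2)
        * (1 + max (Real.log ‖x‖) 0 + max (Real.log ‖y‖) 0) := by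
        apply mul_le_mul_of_nonneg_left (by linarith)
        nlinarith [sq_nonneg ‖x‖, sq_nonneg ‖y‖]

end
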